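/- Let 0 < α < 2, −1 < s ≤ 1 with |s| > α/2, and fix ω with απ/2 < ω < min{|s|, α}·π. Then for every η ≥ 0 and every ζ on the contour C_ω (consisting of the rays arg ζ = ±ω with |ζ| ≥ 1 and the arc |ζ| = 1, |arg ζ| ≤ ω), one has |ζ − η e^{iπs}| ≥ |sin(π|s| − ω)|. -/

import Mathlib

set_option maxHeartbeats 1000000


open Real Complex

/-- Lower bound on the distance from a point `η e^{iπs}` on the ray `arg z = πs`
to the Hankel contour `C_ω`. -/
theorem stmt1 (α s ω : ℝ) (hα : 0 < α) (hα2 : α < 2)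
    (hs1 : -1 < s) (hs2 : s ≤ 1) (hs3 : α / 2 < |s|)
    (hω1 : α * π / 2 < ω) (hω2 : ω < min |s| α * π)
    (η : ℝ) (hη : 0 ≤ η) (ζ : ℂ)
    (hζ : (‖ζ‖ = 1 ∧ |ζ.arg| ≤ ω) ∨
          (1 ≤ ‖ζ‖ ∧ (ζ.arg = ω ∨ ζ.arg = -ω))) :
    |Real.sin (π * |s| - ω)| ≤
      ‖ζ - (η : ℂ) * Complex.exp (π * s * Complex.I)‖ := by
  have hπ : (0:ℝ) < π := Real.pi_pos
  have hω0 : 0 < ω := lt_of_le_of_lt (by positivity) hω1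
  set r := ‖ζ‖ with hrdef
  set θ := ζ.arg with hθdef
  have hr : 1 ≤ r := by
    rcases hζ with ⟨h1, _⟩ | ⟨h1, _⟩
    · exact h1.ge
    · exact h1
  have hθ : |θ| ≤ ω := by
    rcases hζ with ⟨_, h2⟩ | ⟨_, h2⟩
    · exact h2
    · rcases h2 with h | h <;> rw [h] <;> simp [abs_of_pos hω0, hω0.le]
  set a := π * |s| - ω with hadef
  have hs4 : |s| ≤ 1 := abs_le.mpr ⟨hs1.le, hs2⟩
  have ha0 : 0 < a := by
    have : ω < |s| * π :=
      lt_of_lt_of_le hω2 (mul_le_mul_of_nonneg_right (min_le_left _ _) hπ.le)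
    nlinarith
  have haπ : a < π := by nlinarith [abs_nonneg s]
  have hsin : 0 ≤ Real.sin a := Real.sin_nonneg_of_nonneg_of_le_pi ha0.le haπ.le
  -- angle bound
  set t := |π * s - θ| with htdef
  have hπs : |π * s| = π * |s| := by rw [abs_mul, abs_of_pos hπ]
  have h1 : a ≤ t := by
    have := abs_sub_abs_le_abs_sub (π * s) θ
    rw [hπs] at this
    have hθ' : -ω ≤ -|θ| := neg_le_neg hθ
    simp only [htdef, hadef]; linarith
  have h2 : t ≤ 2 * π - a := by
    have := abs_sub (π * s) θ
    rw [hπs] at this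
    nlinarith
  have hcos : Real.cos (π * s - θ) ≤ Real.cos a := by
    rw [← Real.cos_abs (π * s - θ)]
    rcases le_or_gt t π with h | h
    · exact Real.cos_le_cos_of_nonneg_of_le_pi ha0.le h h1
    · have : Real.cos t = Real.cos (2 * π - t) := by
        rw [Real.cos_sub, Real.cos_two_pi, Real.sin_two_pi]; ring
      rw [this]
      exact Real.cos_le_cos_of_nonneg_of_le_pi ha0.le (by linarith) (by linarith)
  -- rewrite ζ and the point
  have hζeq : ζ = (r : ℂ) * (↑(Real.cos θ) + ↑(Real.sin θ) * Complex.I) := by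
    rw [Complex.ofReal_cos, Complex.ofReal_sin]
    exact (Complex.norm_mul_cos_add_sin_mul_I ζ).symm
  have hweq : Complex.exp (π * s * Complex.I)
      = ↑(Real.cos (π * s)) + ↑(Real.sin (π * s)) * Complex.I := by
    rw [Complex.ofReal_cos, Complex.ofReal_sin]
    have : (↑π * ↑s * Complex.I : ℂ) = ((↑(π * s) : ℂ)) * Complex.I := by
      push_cast; ring
    rw [this, Complex.exp_mul_I]
  clear_value r θ a t
  have hkey : Real.sin a ^ 2 ≤ Complex.normSq (ζ - (η : ℂ) * Complex.exp (π * s * Complex.I)) := by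
    rw [hζeq, hweq]
    have hns : ∀ A B C D : ℝ, Complex.normSq ((r : ℂ) * (↑A + ↑B * Complex.I)
        - (η : ℂ) * (↑C + ↑D * Complex.I))
        = (r * A - η * C) ^ 2 + (r * B - η * D) ^ 2 := by
      intro A B C D
      simp [Complex.normSq_apply]; ring
    rw [hns]
    have hexp : (r * Real.cos θ - η * Real.cos (π * s)) ^ 2
          + (r * Real.sin θ - η * Real.sin (π * s)) ^ 2
        = r ^ 2 + η ^ 2 - 2 * r * η * Real.cos (π * s - θ) := by
      rw [Real.cos_sub]
      nlinarith [Real.sin_sq_add_cos_sq θ, Real.sin_sq_add_cos_sq (π * s)]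
    rw [hexp]
    have hrη : 0 ≤ r * η := mul_nonneg (by linarith) hη
    have step1 : r ^ 2 + η ^ 2 - 2 * r * η * Real.cos a
        ≤ r ^ 2 + η ^ 2 - 2 * r * η * Real.cos (π * s - θ) := by
      nlinarith [mul_le_mul_of_nonneg_left hcos hrη]
    have step2 : Real.sin a ^ 2 ≤ r ^ 2 + η ^ 2 - 2 * r * η * Real.cos a := by
      nlinarith [sq_nonneg (η - r * Real.cos a), Real.sin_sq_add_cos_sq a,
        mul_nonneg (by nlinarith : (0:ℝ) ≤ r ^ 2 - 1) (sq_nonneg (Real.sin a))]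
    linarith
  rw [_root_.abs_of_nonneg hsin]
  calc Real.sin a = Real.sqrt (Real.sin a ^ 2) := (Real.sqrt_sq hsin).symm
    _ ≤ Real.sqrt (Complex.normSq (ζ - (η : ℂ) * Complex.exp (π * s * Complex.I))) :=
        Real.sqrt_le_sqrt hkey
    _ = _ := (Complex.norm_def _).symm
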